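/- Let r ≥ 1 and 1 ≤ j ≤ r, let p, q, ℓ⁺ and p_i, q_i, k_i (for 1 ≤ i ≤ r) be positive integers, and set ℓ⁻ = Σ_{i=1}^r q_i k_i and D_j = q_j(ℓ⁺ + Σ_{i=1}^j p_i k_i) + p_j Σ_{i=j+1}^r q_i k_i. Assume that p_b q_j ≤ p_j q_b for all 1 ≤ b ≤ j−1, that p_j > pq·q_j, and that either (p > 1 and q > 1) or ℓ⁺ > ℓ⁻. Then, as rational numbers, 1 − (p + q)/(ℓ⁺ + pq·ℓ⁻) > 1 − (p_j + q_j)/D_j. -/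
import Mathlib


/-- Proposition 6.4 (part 2): if `p, q > 1` or `ℓ⁺ > ℓ⁻`, then the virtual
spectral value `α_{i⁻} = 1 - (p+q)/(ℓ⁺ + pq ℓ⁻)` at the vertex carrying the
horizontal edge is strictly larger than each virtual spectral value
`α_j = 1 - (p_j + q_j)/D_j` of the Newton polygon attached to the right. -/
theorem virtual_spectral_value_comparison (r : ℕ) (hr : 1 ≤ r)
    (j : ℕ) (hj1 : 1 ≤ j) (hjr : j ≤ r)
    (P Q lp : ℤ) (hP : 0 < P) (hQ : 0 < Q) (hlp : 0 < lp)
    (p q k : ℕ → ℤ)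
    (hp : ∀ i, 1 ≤ i → i ≤ r → 0 < p i)
    (hq : ∀ i, 1 ≤ i → i ≤ r → 0 < q i)
    (hk : ∀ i, 1 ≤ i → i ≤ r → 0 < k i)
    (hord : ∀ b, 1 ≤ b → b < j → p b * q j ≤ p j * q b)
    (hdet : P * Q * q j < p j)
    (hcase : (1 < P ∧ 1 < Q) ∨ (∑ i ∈ Finset.Icc 1 r, q i * k i) < lp) :
    1 - ((P + Q : ℤ) : ℚ) / ((lp + P * Q * ∑ i ∈ Finset.Icc 1 r, q i * k i : ℤ) : ℚ)
      > 1 - ((p j + q j : ℤ) : ℚ) /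
          ((q j * (lp + ∑ i ∈ Finset.Icc 1 j, p i * k i)
            + p j * ∑ i ∈ Finset.Icc (j + 1) r, q i * k i : ℤ) : ℚ) := by
  set L := ∑ i ∈ Finset.Icc 1 r, q i * k i with hLdef
  set S1 := ∑ i ∈ Finset.Icc 1 j, p i * k i with hS1def
  set T := ∑ i ∈ Finset.Icc 1 j, q i * k i with hTdef
  set S2 := ∑ i ∈ Finset.Icc (j + 1) r, q i * k i with hS2def
  have hqj : 0 < q j := hq j hj1 hjr
  have hpj : 0 < p j := hp j hj1 hjr
  -- split of L
  have hsplit : L = T + S2 := by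
    have h := Finset.sum_Ioc_consecutive (fun i => q i * k i) (Nat.zero_le j) hjr
    rw [hLdef, hTdef, hS2def]
    rw [show Finset.Icc 1 r = Finset.Ioc 0 r from (Finset.Icc_add_one_left_eq_Ioc 0 r),
        show Finset.Icc 1 j = Finset.Ioc 0 j from (Finset.Icc_add_one_left_eq_Ioc 0 j),
        show Finset.Icc (j + 1) r = Finset.Ioc j r from (Finset.Icc_add_one_left_eq_Ioc j r)]
    exact h.symm
  have hTpos : 0 < T := by
    apply Finset.sum_pos
    · intro i hi
      simp only [Finset.mem_Icc] at hi
      exact mul_pos (hq i hi.1 (hi.2.trans hjr)) (hk i hi.1 (hi.2.trans hjr))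
    · exact ⟨j, Finset.mem_Icc.mpr ⟨hj1, le_refl j⟩⟩
  have hS2nn : 0 ≤ S2 := by
    apply Finset.sum_nonneg
    intro i hi
    simp only [Finset.mem_Icc] at hi
    exact (mul_pos (hq i (le_trans hj1 (Nat.le_of_succ_le hi.1)) hi.2)
      (hk i (le_trans hj1 (Nat.le_of_succ_le hi.1)) hi.2)).le
  have hS1nn : 0 ≤ S1 := by
    apply Finset.sum_nonneg
    intro i hi
    simp only [Finset.mem_Icc] at hi
    exact (mul_pos (hp i hi.1 (hi.2.trans hjr)) (hk i hi.1 (hi.2.trans hjr))).le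
  have hLnn : 0 ≤ L := by rw [hsplit]; linarith
  have hmix : q j * S1 ≤ p j * T := by
    rw [hS1def, hTdef, Finset.mul_sum, Finset.mul_sum]
    apply Finset.sum_le_sum
    intro i hi
    simp only [Finset.mem_Icc] at hi
    have hki : 0 < k i := hk i hi.1 (hi.2.trans hjr)
    rcases lt_or_eq_of_le hi.2 with hlt | heq
    · have := hord i hi.1 hlt
      nlinarith
    · subst heq; ring_nf; exact le_refl _
  -- denominators positive in ℤ
  have hA : (0 : ℤ) < lp + P * Q * L := by nlinarith [mul_pos hP hQ]
  have hD : (0 : ℤ) < q j * (lp + S1) + p j * S2 := by nlinarith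
  -- key integer inequality
  have key : (P + Q) * (q j * (lp + S1) + p j * S2) < (p j + q j) * (lp + P * Q * L) := by
    have h1 : (P + Q) * (q j * (lp + S1) + p j * S2)
        ≤ (P + Q) * (q j * lp + p j * L) := by
      apply mul_le_mul_of_nonneg_left _ (by linarith : (0:ℤ) ≤ P + Q)
      rw [hsplit]
      have : q j * (lp + S1) = q j * lp + q j * S1 := by ring
      have h2 : p j * (T + S2) = p j * T + p j * S2 := by ring
      linarith
    have h2 : (P + Q) * (q j * lp + p j * L) < (p j + q j) * (lp + P * Q * L) := by
      have hd : 0 < p j - P * Q * q j := by linarith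
      rcases hcase with ⟨hP1, hQ1⟩ | hlt
      · have hs1 : (1 : ℤ) ≤ (P - 1) * (Q - 1) := by
          have h := mul_pos (by linarith : (0:ℤ) < P - 1) (by linarith : (0:ℤ) < Q - 1)
          have := Int.lt_iff_add_one_le.mp h
          linarith
        have A1 : 0 < lp * (p j - P * Q * q j) := mul_pos hlp hd
        have A2 : 0 ≤ lp * q j * ((P - 1) * (Q - 1)) :=
          mul_nonneg (mul_pos hlp hqj).le (by linarith)
        have A3 : 0 ≤ L * (p j * ((P - 1) * (Q - 1) - 1) + P * Q * q j) :=
          mul_nonneg hLnn (add_nonneg (mul_nonneg hpj.le (by linarith))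
            (mul_nonneg (mul_pos hP hQ).le hqj.le))
        have expand : (p j + q j) * (lp + P * Q * L) - (P + Q) * (q j * lp + p j * L)
            = lp * (p j - P * Q * q j) + lp * q j * ((P - 1) * (Q - 1))
              + L * (p j * ((P - 1) * (Q - 1) - 1) + P * Q * q j) := by ring
        linarith
      · have hs0 : (0 : ℤ) ≤ (P - 1) * (Q - 1) :=
          mul_nonneg (by linarith) (by linarith)
        have A1 : 0 < (p j - P * Q * q j) * (lp - L) := mul_pos hd (by linarith)
        have A2 : 0 ≤ (P - 1) * (Q - 1) * (lp * q j + L * p j) :=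
          mul_nonneg hs0 (add_nonneg (mul_pos hlp hqj).le (mul_nonneg hLnn hpj.le))
        have expand : (p j + q j) * (lp + P * Q * L) - (P + Q) * (q j * lp + p j * L)
            = (p j - P * Q * q j) * (lp - L) + (P - 1) * (Q - 1) * (lp * q j + L * p j) := by
          ring
        linarith
    linarith
  -- pass to ℚ
  rw [gt_iff_lt, sub_lt_sub_iff_left, div_lt_div_iff₀]
  · exact_mod_cast key
  · exact_mod_cast hA
  · exact_mod_cast hD
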